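/- For all ω > 0, all σ ≥ 1, all λ > 0, all τ > 0 and all reals a, b, c with a ≥ ω, b ≥ ω, c ≥ ω: λ^a Γ(b+c+1)^σ τ^c ≤ 2^{σ/ω} ( λ^{a+c} Γ(b+1)^σ + Γ(a+b+c+1)^σ τ^{a+c} ). -/

import Mathlib

open MeasureTheory Real
open scoped BigOperators ENNReal NNReal

namespace MQEpaper

/-- Points of ℝⁿ. -/
abbrev Pt (n : ℕ) := Fin n → ℝ

/-- Multi-indices. -/
abbrev MIdx (n : ℕ) := Fin n → ℕ

/-- Partial derivative in the `j`-th coordinate direction. -/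
noncomputable def pd {n : ℕ} (j : Fin n) (u : Pt n → ℂ) : Pt n → ℂ :=
  fun x => fderiv ℝ u x (Pi.single j 1)

/-- Iterated partial derivative `∂^α`. -/
noncomputable def pdM {n : ℕ} (α : MIdx n) (u : Pt n → ℂ) : Pt n → ℂ :=
  (List.finRange n).foldr (fun j v => (pd j)^[α j] v) u

/-- Length `|α| = Σ αᵢ` of a multi-index. -/
def msize {n : ℕ} (α : MIdx n) : ℕ := ∑ i, α i

/-- Pairing `⟨α,q⟩ = Σ αᵢ qᵢ` of a multi-index with a weight. -/
def dotQ {n : ℕ} (α : MIdx n) (q : Pt n) : ℝ := ∑ i, (α i : ℝ) * q i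

/-- A multi-index viewed as a point of ℝⁿ. -/
def coeR {n : ℕ} (α : MIdx n) : Pt n := fun i => (α i : ℝ)

/-- The operator `D^α = (-i)^{|α|} ∂^α`. -/
noncomputable def Dop {n : ℕ} (α : MIdx n) (u : Pt n → ℂ) : Pt n → ℂ :=
  fun x => (-Complex.I) ^ msize α * pdM α u x

/-- The differential operator `P(x,D) u = Σ_α a_α(x) D^α u` with coefficient family `a`. -/
noncomputable def Pop {n : ℕ} (a : MIdx n → Pt n → ℂ) (u : Pt n → ℂ) : Pt n → ℂ :=
  fun x => ∑ᶠ α : MIdx n, a α x * Dop α u x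

/-- Iterated application `P_{i₁} ⋯ P_{i_l} u` of the operators of a system along a list. -/
noncomputable def PopList {n N : ℕ} (a : Fin N → MIdx n → Pt n → ℂ) :
    List (Fin N) → (Pt n → ℂ) → Pt n → ℂ
  | [], u => u
  | j :: L, u => Pop (a j) (PopList a L u)

/-- The symbol `P(x,ξ) = Σ_α a_α(x) ξ^α`. -/
noncomputable def symb {n : ℕ} (a : MIdx n → Pt n → ℂ) (x ξ : Pt n) : ℂ :=
  ∑ᶠ α : MIdx n, a α x * ∏ i, (ξ i : ℂ) ^ α i

/-- The `q`-quasi-homogeneous part `P_q(x,ξ) = Σ_{⟨α,q⟩=1} a_α(x) ξ^α` of the symbol. -/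
noncomputable def symbq {n : ℕ} (a : MIdx n → Pt n → ℂ) (q : Pt n) (x ξ : Pt n) : ℂ :=
  ∑ᶠ α ∈ {α : MIdx n | dotQ α q = 1}, a α x * ∏ i, (ξ i : ℂ) ^ α i

/-- The `ξ`-derivative `P^{(α)}(x,ξ) = ∂_ξ^α P(x,ξ)` of the symbol. -/
noncomputable def symbD {n : ℕ} (a : MIdx n → Pt n → ℂ) (α : MIdx n) (x ξ : Pt n) : ℂ :=
  ∑ᶠ β ∈ {β : MIdx n | ∀ i, α i ≤ β i},
    a β x * (∏ i, ((β i).descFactorial (α i) : ℂ)) * ∏ i, (ξ i : ℂ) ^ (β i - α i)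

/-- The Newton polyhedron of the system `a` at the point `x`. -/
def NPoly {n N : ℕ} (a : Fin N → MIdx n → Pt n → ℂ) (x : Pt n) : Set (Pt n) :=
  convexHull ℝ ({0} ∪ {y | ∃ α : MIdx n, (∃ j, a j α x ≠ 0) ∧ y = coeR α})

/-- A polyhedron `F` is regular with associated finite set `Q ⊂ (0,∞)ⁿ`. -/
def IsRegular {n : ℕ} (F : Set (Pt n)) (Q : Finset (Pt n)) : Prop :=
  Q.Nonempty ∧ (∀ q ∈ Q, ∀ i, 0 < q i) ∧
    F = ⋂ q ∈ Q, {y : Pt n | (∀ i, 0 ≤ y i) ∧ ∑ i, y i * q i ≤ 1}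

/-- `V(ξ) = Σ_{α ∈ S(F)} |ξ^α|`, the sum over the (integer) vertices of `F`. -/
noncomputable def Vfun {n : ℕ} (F : Set (Pt n)) (ξ : Pt n) : ℝ :=
  ∑ᶠ α ∈ {α : MIdx n | coeR α ∈ F.extremePoints ℝ}, |∏ i, ξ i ^ α i|

/-- `k(y,F) = inf {t > 0 : y/t ∈ F}`. -/
noncomputable def kF {n : ℕ} (F : Set (Pt n)) (y : Pt n) : ℝ :=
  sInf {t : ℝ | 0 < t ∧ (fun i => y i / t) ∈ F}

/-- `μ_j = max_{q ∈ Q} q_j⁻¹`. -/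
noncomputable def muj {n : ℕ} (Q : Finset (Pt n)) (j : Fin n) : ℝ :=
  sSup ((fun q : Pt n => (q j)⁻¹) '' ↑Q)

/-- `μ = max_j μ_j`. -/
noncomputable def muQ {n : ℕ} (Q : Finset (Pt n)) : ℝ :=
  sSup (Set.range (muj Q))

/-- The weight `θ = (μ/μ₁, …, μ/μₙ)`. -/
noncomputable def theta {n : ℕ} (Q : Finset (Pt n)) : Pt n :=
  fun j => muQ Q / muj Q j

/-- The system `a` is multi-quasi-elliptic in `Ω` with Newton polyhedron `F`
(regular with associated set `Q`). -/
def IsMQE {n N : ℕ} (a : Fin N → MIdx n → Pt n → ℂ) (Ω F : Set (Pt n))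
    (Q : Finset (Pt n)) : Prop :=
  (∀ x ∈ Ω, NPoly a x = F) ∧ IsRegular F Q ∧
    ∀ x ∈ Ω, ∃ C > (0:ℝ), ∃ R ≥ (0:ℝ), ∀ ξ : Pt n, R ≤ ‖ξ‖ →
      Vfun F ξ ≤ C * ∑ j, ‖symb (a j) x ξ‖

/-- The generalized Gevrey class `G^{F,s}(Ω)` attached to a regular polyhedron `F`
(with associated set `Q`). -/
def GClassF {n : ℕ} (Ω F : Set (Pt n)) (Q : Finset (Pt n)) (s : ℝ) (u : Pt n → ℂ) : Prop :=
  ContDiffOn ℝ (⊤ : ℕ∞) u Ω ∧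
    ∀ H : Set (Pt n), H ⊆ Ω → IsCompact H → ∃ C > (0:ℝ), ∀ α : MIdx n, ∀ x ∈ H,
      ‖pdM α u x‖ ≤ C ^ (msize α + 1) * Real.Gamma (muQ Q * kF F (coeR α) + 1) ^ s

/-- The anisotropic Gevrey class `G^{w,s}(Ω)` attached to a weight `w ∈ (0,∞)ⁿ`. -/
def GClassW {n : ℕ} (Ω : Set (Pt n)) (w : Pt n) (s : ℝ) (u : Pt n → ℂ) : Prop :=
  ContDiffOn ℝ (⊤ : ℕ∞) u Ω ∧
    ∀ H : Set (Pt n), H ⊆ Ω → IsCompact H → ∃ C > (0:ℝ), ∀ β : MIdx n, ∀ x ∈ H,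
      ‖pdM β u x‖ ≤ C ^ (msize β + 1) * Real.Gamma (dotQ β w + 1) ^ s

/-- The `L²` norm of `v` on a set `ω`. -/
noncomputable def L2 {n : ℕ} (v : Pt n → ℂ) (ω : Set (Pt n)) : ℝ :=
  (eLpNorm v 2 (volume.restrict ω)).toReal

/-- The space `G^s(Ω,(P_j))` of Gevrey vectors of the system. -/
def GIter {n N : ℕ} (Ω : Set (Pt n)) (a : Fin N → MIdx n → Pt n → ℂ)
    (Q : Finset (Pt n)) (s : ℝ) (u : Pt n → ℂ) : Prop :=
  ContDiffOn ℝ (⊤ : ℕ∞) u Ω ∧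
    ∀ H : Set (Pt n), H ⊆ Ω → IsCompact H → ∃ C > (0:ℝ), ∀ L : List (Fin N),
      L2 (PopList a L u) H ≤ C ^ (L.length + 1) * (L.length.factorial : ℝ) ^ (s * muQ Q)

/-- The seminorm `|u|_{k,ω} = Σ_{k(α,F)=k} ‖∂^α u‖_{L²(ω)}` (equal to `‖u‖_{L²(ω)}`
for `k ≤ 0`). -/
noncomputable def semiN {n : ℕ} (F : Set (Pt n)) (k : ℝ) (u : Pt n → ℂ)
    (ω : Set (Pt n)) : ℝ :=
  if k ≤ 0 then L2 u ω
  else ∑ᶠ α ∈ {α : MIdx n | kF F (coeR α) = k}, L2 (pdM α u) ω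

/-- The anisotropic ball `B_ρ = {x : Σ_j |x_j|^{2μ_j/μ} < ρ²}`. -/
noncomputable def Bball {n : ℕ} (Q : Finset (Pt n)) (ρ : ℝ) : Set (Pt n) :=
  {x | ∑ j, |x j| ^ (2 * muj Q j / muQ Q) < ρ ^ 2}

/-- `σ_p(u,λ,R) = (p!)^{-sμ} λ^{-p} sup_{R/2 ≤ ρ < R} (R-ρ)^{pμ} |u|_{p,B_ρ}`. -/
noncomputable def sigmaP {n : ℕ} (F : Set (Pt n)) (Q : Finset (Pt n)) (s : ℝ)
    (u : Pt n → ℂ) (lam R : ℝ) (p : ℕ) : ℝ :=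
  (p.factorial : ℝ) ^ (-(s * muQ Q)) * lam ^ (-(p : ℝ)) *
    sSup ((fun ρ => (R - ρ) ^ ((p : ℝ) * muQ Q) * semiN F (p : ℝ) u (Bball Q ρ)) ''
      Set.Ico (R / 2) R)

/-- `v(n)`, the number of elements of `K ∩ [0,n)` where `K = {k(α,F) : α ∈ ℕⁿ}`. -/
noncomputable def vK {n : ℕ} (F : Set (Pt n)) : ℕ :=
  Set.ncard {k : ℝ | (∃ α : MIdx n, kF F (coeR α) = k) ∧ 0 ≤ k ∧ k < (n : ℝ)}

/-- The functions `A_{(i₁,…,i_k)}(x,r)` from the proof of the necessity part: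
`A_{()}(x,r) = φ(r^{εq}(x-x₀))` and
`A_{(i₁,…,i_{k+1})} = Σ_{⟨α,q⟩≤1} (1/α!) P_{i_{k+1}}^{(α)}(x,r^qξ₀) D_x^α A_{(i₁,…,i_k)}`.
The list argument is `[i_{k+1}, …, i₁]` (most recently applied operator first). -/
noncomputable def Aseq {n N : ℕ} (a : Fin N → MIdx n → Pt n → ℂ) (q ξ₀ x₀ : Pt n)
    (ε : ℝ) (φ : Pt n → ℂ) : List (Fin N) → ℝ → Pt n → ℂ
  | [], r => fun x => φ fun i => r ^ (ε * q i) * (x i - x₀ i)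
  | j :: L, r => fun x =>
      ∑ᶠ α ∈ {α : MIdx n | dotQ α q ≤ 1},
        (∏ i, ((α i).factorial : ℂ))⁻¹ *
          symbD (a j) α x (fun i => r ^ q i * ξ₀ i) *
          Dop α (Aseq a q ξ₀ x₀ ε φ L r) x


/-- inequality (3.7) of the paper: for `ω > 0`, `σ ≥ 1`, `λ,τ > 0` and
`a,b,c ≥ ω`, `λ^a Γ(b+c+1)^σ τ^c ≤ 2^{σ/ω} (λ^{a+c} Γ(b+1)^σ + Γ(a+b+c+1)^σ τ^{a+c})`. -/
theorem statement_14 (ω σ lam τ a b c : ℝ) (hω : 0 < ω) (hσ : 1 ≤ σ)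
    (hlam : 0 < lam) (hτ : 0 < τ) (ha : ω ≤ a) (hb : ω ≤ b) (hc : ω ≤ c) :
    lam ^ a * Real.Gamma (b + c + 1) ^ σ * τ ^ c ≤
      2 ^ (σ / ω) * (lam ^ (a + c) * Real.Gamma (b + 1) ^ σ +
        Real.Gamma (a + b + c + 1) ^ σ * τ ^ (a + c)) := by
  have hσ0 : (0:ℝ) ≤ σ := by linarith
  have hac : 0 < a + c := by linarith
  set t := a / (a + c) with ht
  have ht0 : 0 < t := div_pos (by linarith) hac
  have ht1 : (0:ℝ) ≤ 1 - t := by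
    have : t ≤ 1 := (div_le_one hac).2 (by linarith)
    linarith
  have hΓb : 0 < Real.Gamma (b + 1) := Real.Gamma_pos_of_pos (by linarith)
  have hΓbc : 0 < Real.Gamma (b + c + 1) := Real.Gamma_pos_of_pos (by linarith)
  have hΓabc : 0 < Real.Gamma (a + b + c + 1) := Real.Gamma_pos_of_pos (by linarith)
  have hconv := Real.convexOn_log_Gamma.2 (Set.mem_Ioi.2 (show (0:ℝ) < b + 1 by linarith))
    (Set.mem_Ioi.2 (show (0:ℝ) < a + b + c + 1 by linarith)) ht0.le ht1 (by ring)
  simp only [smul_eq_mul, Function.comp_apply] at hconv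
  have hcomb : t * (b + 1) + (1 - t) * (a + b + c + 1) = b + c + 1 := by
    rw [ht]
    field_simp
    ring
  rw [hcomb] at hconv
  have key : Real.Gamma (b + c + 1) ≤
      Real.Gamma (b + 1) ^ t * Real.Gamma (a + b + c + 1) ^ (1 - t) := by
    calc Real.Gamma (b + c + 1) = Real.exp (Real.log (Real.Gamma (b + c + 1))) :=
          (Real.exp_log hΓbc).symm
      _ ≤ Real.exp (t * Real.log (Real.Gamma (b + 1)) +
            (1 - t) * Real.log (Real.Gamma (a + b + c + 1))) := Real.exp_le_exp.2 hconv
      _ = Real.Gamma (b + 1) ^ t * Real.Gamma (a + b + c + 1) ^ (1 - t) := by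
          rw [Real.exp_add, mul_comm t, mul_comm (1 - t),
            ← Real.rpow_def_of_pos hΓb, ← Real.rpow_def_of_pos hΓabc]
  have key2 : Real.Gamma (b + c + 1) ^ σ ≤
      (Real.Gamma (b + 1) ^ σ) ^ t * (Real.Gamma (a + b + c + 1) ^ σ) ^ (1 - t) := by
    calc Real.Gamma (b + c + 1) ^ σ
        ≤ (Real.Gamma (b + 1) ^ t * Real.Gamma (a + b + c + 1) ^ (1 - t)) ^ σ :=
          Real.rpow_le_rpow hΓbc.le key hσ0
      _ = (Real.Gamma (b + 1) ^ σ) ^ t * (Real.Gamma (a + b + c + 1) ^ σ) ^ (1 - t) := by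
          rw [Real.mul_rpow (by positivity) (by positivity), ← Real.rpow_mul hΓb.le,
            ← Real.rpow_mul hΓabc.le, ← Real.rpow_mul hΓb.le, ← Real.rpow_mul hΓabc.le,
            mul_comm t σ, mul_comm (1 - t) σ]
  have hlama : lam ^ a = (lam ^ (a + c)) ^ t := by
    rw [← Real.rpow_mul hlam.le]
    congr 1
    rw [ht]
    field_simp
  have htauc : τ ^ c = (τ ^ (a + c)) ^ (1 - t) := by
    rw [← Real.rpow_mul hτ.le]
    congr 1
    rw [ht]
    field_simp
    ring
  set X := lam ^ (a + c) * Real.Gamma (b + 1) ^ σ with hX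
  set Y := Real.Gamma (a + b + c + 1) ^ σ * τ ^ (a + c) with hY
  have hX0 : 0 ≤ X := by positivity
  have hY0 : 0 ≤ Y := by positivity
  have main : lam ^ a * Real.Gamma (b + c + 1) ^ σ * τ ^ c ≤ X + Y := by
    have h1 : lam ^ a * Real.Gamma (b + c + 1) ^ σ * τ ^ c ≤ X ^ t * Y ^ (1 - t) := by
      rw [hlama, htauc, hX, hY,
        Real.mul_rpow (by positivity) (by positivity),
        Real.mul_rpow (by positivity) (by positivity)]
      calc (lam ^ (a + c)) ^ t * Real.Gamma (b + c + 1) ^ σ * (τ ^ (a + c)) ^ (1 - t)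
          ≤ (lam ^ (a + c)) ^ t *
            ((Real.Gamma (b + 1) ^ σ) ^ t * (Real.Gamma (a + b + c + 1) ^ σ) ^ (1 - t)) *
            (τ ^ (a + c)) ^ (1 - t) := by
            apply mul_le_mul_of_nonneg_right _ (by positivity)
            exact mul_le_mul_of_nonneg_left key2 (by positivity)
        _ = (lam ^ (a + c)) ^ t * (Real.Gamma (b + 1) ^ σ) ^ t *
            ((Real.Gamma (a + b + c + 1) ^ σ) ^ (1 - t) * (τ ^ (a + c)) ^ (1 - t)) := by ring
    have h2 : X ^ t * Y ^ (1 - t) ≤ t * X + (1 - t) * Y :=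
      Real.geom_mean_le_arith_mean2_weighted ht0.le ht1 hX0 hY0 (by ring)
    have h3 : t * X + (1 - t) * Y ≤ X + Y := by
      have : t ≤ 1 := by linarith
      nlinarith
    linarith
  have h2pow : (1:ℝ) ≤ 2 ^ (σ / ω) := by
    apply Real.one_le_rpow (by norm_num)
    positivity
  calc lam ^ a * Real.Gamma (b + c + 1) ^ σ * τ ^ c ≤ X + Y := main
    _ = 1 * (X + Y) := (one_mul _).symm
    _ ≤ 2 ^ (σ / ω) * (X + Y) := by
        apply mul_le_mul_of_nonneg_right h2pow (by linarith)

end MQEpaper
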